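/- The set of multiplicative functionals on P̄ that arise as restrictions of coherent states on (A, P̄) is a weak-* closed (hence compact) subset of the maximal ideal space (character space) of the commutative unital Banach algebra P̄. -/

import Mathlib

set_option linter.unusedSectionVars false

open scoped ComplexOrder InnerProductSpace

variable {A : Type*} [NormedRing A] [StarRing A] [CStarRing A] [NormedAlgebra ℂ A]
  [StarModule ℂ A] [CompleteSpace A]

/-- A state on a unital C*-algebra: a positive linear functional of norm one
(equivalently, taking the value 1 at the unit). -/
def IsState (ω : A →ₗ[ℂ] ℂ) : Prop :=
  ω 1 = 1 ∧ ∀ x : A, 0 ≤ ω (star x * x)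

/-- A polarization of a unital C*-algebra `A`: a closed commutative unital Banach
subalgebra `P` generating `A` (as a C*-algebra) with `P ∩ P* = ℂ·1`. -/
def IsPolarization (P : Subalgebra ℂ A) : Prop :=
  IsClosed (P : Set A) ∧
  (∀ a ∈ P, ∀ b ∈ P, a * b = b * a) ∧
  (Algebra.adjoin ℂ ((P : Set A) ∪ star (P : Set A))).topologicalClosure = ⊤ ∧
  (∀ x ∈ P, star x ∈ P → ∃ c : ℂ, x = algebraMap ℂ A c)

/-- A coherent state on the polarized C*-algebra `(A, P)`. -/
def IsCoherentState (P : Subalgebra ℂ A) (ω : A →ₗ[ℂ] ℂ) : Prop :=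
  IsState ω ∧ ∀ x : A, ∀ a ∈ P, ω (x * a) = ω x * ω a

/-- The polarized C*-algebra `(A, P)` admits norm normal ordering: finite sums
`∑ bₖ* aₖ` with `aₖ, bₖ ∈ P` are norm-dense in `A`. -/
def AdmitsNormalOrdering (P : Subalgebra ℂ A) : Prop :=
  Dense {x : A | ∃ (n : ℕ) (a b : Fin n → A), (∀ i, a i ∈ P ∧ b i ∈ P) ∧
    x = ∑ i, star (b i) * a i}

/-- `(π, H, v)` is a GNS triple for the state `ω`. -/
def IsGNS {H : Type*} [NormedAddCommGroup H] [InnerProductSpace ℂ H] [CompleteSpace H]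
    (ω : A →ₗ[ℂ] ℂ) (π : A →⋆ₐ[ℂ] (H →L[ℂ] H)) (v : H) : Prop :=
  ‖v‖ = 1 ∧ (∀ x : A, ω x = ⟪v, π x v⟫_ℂ) ∧
    Dense (Set.range fun x : A => π x v)

lemma state_norm_le (ω : A →ₗ[ℂ] ℂ) (h1 : ω 1 = 1)
    (hpos : ∀ x : A, 0 ≤ ω (star x * x)) (x : A) : ‖ω x‖ ≤ ‖x‖ := by
  letI : CStarAlgebra A := ⟨⟩
  letI := CStarAlgebra.spectralOrder A
  haveI := CStarAlgebra.spectralOrderedRing A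
  -- ω is nonnegative on nonneg elements
  have hmono : ∀ a : A, 0 ≤ a → 0 ≤ ω a := by
    intro a ha
    rw [StarOrderedRing.nonneg_iff] at ha
    induction ha using AddSubmonoid.closure_induction with
    | mem y hy => obtain ⟨s, rfl⟩ := hy; exact hpos s
    | zero => simp
    | add x y hx hy ihx ihy => rw [map_add]; exact add_nonneg ihx ihy
  -- ω of an ℝ-algebraMap
  have halg : ∀ r : ℝ, ω (algebraMap ℝ A r) = (r : ℂ) := by
    intro r
    have : algebraMap ℝ A r = (r : ℂ) • (1 : A) := by
      rw [Algebra.algebraMap_eq_smul_one, ← algebraMap_smul ℂ r (1 : A)]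
      rfl
    rw [this, map_smul, h1, smul_eq_mul, mul_one]
  -- ω is real on selfadjoint elements
  have hre : ∀ a : A, IsSelfAdjoint a → (ω a).im = 0 := by
    intro a ha
    have h2 : 0 ≤ ω (algebraMap ℝ A ‖a‖ - a) :=
      hmono _ (sub_nonneg.mpr ha.le_algebraMap_norm_self)
    have h2' : (ω (algebraMap ℝ A ‖a‖ - a)).im = 0 := by
      rw [Complex.le_def] at h2; exact h2.2.symm
    have hms := map_sub ω (algebraMap ℝ A ‖a‖) a
    rw [halg] at hms
    have hval : ω a = (‖a‖ : ℂ) - ω (algebraMap ℝ A ‖a‖ - a) := by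
      rw [hms]; ring
    rw [hval, Complex.sub_im, h2', Complex.ofReal_im, sub_zero]
  -- ω (star x) = conj (ω x)
  have hstar : ∀ y : A, ω (star y) = starRingEnd ℂ (ω y) := by
    intro y
    have hsa1 : IsSelfAdjoint (y + star y) := by
      simp [IsSelfAdjoint, star_add, add_comm]
    have hsa2 : IsSelfAdjoint ((Complex.I : ℂ) • (y - star y)) := by
      simp only [IsSelfAdjoint, star_smul, star_sub, star_star, Complex.star_def,
        Complex.conj_I, neg_smul, smul_sub]
      module
    have e1 : (ω y + ω (star y)).im = 0 := by
      have := hre _ hsa1; rwa [map_add] at this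
    have e2 : (Complex.I * (ω y - ω (star y))).im = 0 := by
      have := hre _ hsa2
      rwa [map_smul, map_sub, smul_eq_mul] at this
    have e2' : (ω y - ω (star y)).re = 0 := by
      simpa [Complex.mul_im] using e2
    apply Complex.ext
    · rw [Complex.sub_re] at e2'
      simp only [Complex.conj_re]; linarith
    · rw [Complex.add_im] at e1
      simp only [Complex.conj_im]; linarith
  -- Cauchy–Schwarz against 1
  have hCS : ‖ω x‖ ^ 2 ≤ (ω (star x * x)).re := by
    set c : ℂ := ω x with hc
    have h := hpos (x - c • 1)
    have hexp : star (x - c • 1) * (x - c • 1)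
        = star x * x - c • star x - (starRingEnd ℂ c) • x
          + (starRingEnd ℂ c * c) • (1 : A) := by
      simp only [star_sub, star_smul, Complex.star_def, star_one, sub_mul, mul_sub,
        smul_mul_assoc, mul_smul_comm, mul_one, one_mul, smul_smul]
      module
    rw [hexp] at h
    have hval : ω (star x * x - c • star x - (starRingEnd ℂ c) • x
        + (starRingEnd ℂ c * c) • (1 : A))
        = ω (star x * x) - ((‖c‖ ^ 2 : ℝ) : ℂ) := by
      simp only [map_add, map_sub, map_smul, h1, smul_eq_mul, mul_one, hstar x, ← hc]
      have : c * starRingEnd ℂ c = ((‖c‖ ^ 2 : ℝ) : ℂ) := by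
        rw [Complex.mul_conj, Complex.normSq_eq_norm_sq]
      rw [this]
      ring
    rw [hval, Complex.le_def] at h
    have := h.1
    simpa [Complex.sub_re, Complex.ofReal_re, sub_nonneg, ← Complex.ofReal_pow] using this
  -- the element star x * x is bounded by ‖x‖²
  have hb : 0 ≤ ω (algebraMap ℝ A (‖x‖ ^ 2) - star x * x) :=
    hmono _ (sub_nonneg.mpr CStarAlgebra.star_mul_le_algebraMap_norm_sq)
  have hb' : (ω (star x * x)).re ≤ ‖x‖ ^ 2 := by
    have hms := map_sub ω (algebraMap ℝ A (‖x‖ ^ 2)) (star x * x)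
    rw [halg] at hms
    rw [Complex.le_def] at hb
    have := hb.1
    rw [hms] at this
    simpa [Complex.sub_re, Complex.ofReal_re, sub_nonneg, ← Complex.ofReal_pow] using this
  nlinarith [norm_nonneg (ω x), norm_nonneg x, hCS, hb']

lemma isClosed_nonneg_complex : IsClosed {z : ℂ | 0 ≤ z} := by
  have : {z : ℂ | 0 ≤ z} = Complex.re ⁻¹' (Set.Ici 0) ∩ Complex.im ⁻¹' {0} := by
    ext z
    simp [Complex.le_def, eq_comm]
  rw [this]
  exact (isClosed_Ici.preimage Complex.continuous_re).inter
    (isClosed_singleton.preimage Complex.continuous_im)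

/-- The set of characters of `P̄` arising as restrictions of coherent
states on `(A, P̄)` is weak-* closed, hence compact, in the character space of the
commutative unital Banach algebra `P̄`. -/
theorem stmt_14 (P : Subalgebra ℂ A) (hP : IsPolarization P)
    (hno : AdmitsNormalOrdering P) :
    IsClosed {χ : WeakDual.characterSpace ℂ P |
        ∃ ω : A →ₗ[ℂ] ℂ, IsCoherentState P ω ∧ ∀ a : P, ω (a : A) = χ a} ∧
    IsCompact {χ : WeakDual.characterSpace ℂ P |
        ∃ ω : A →ₗ[ℂ] ℂ, IsCoherentState P ω ∧ ∀ a : P, ω (a : A) = χ a} := by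
  classical
  set S : Set (WeakDual.characterSpace ℂ P) :=
    {χ | ∃ ω : A →ₗ[ℂ] ℂ, IsCoherentState P ω ∧ ∀ a : P, ω (a : A) = χ a} with hSdef
  -- the inclusion P →L[ℂ] A
  let ι : P →L[ℂ] A := { toLinearMap := (Subalgebra.val P).toLinearMap,
                         cont := continuous_subtype_val }
  -- the restriction map on weak duals
  let r : WeakDual ℂ A → WeakDual ℂ P := fun φ => φ.comp ι
  have hr_cont : Continuous r :=
    WeakDual.continuous_of_continuous_eval fun a => WeakDual.eval_continuous (ι a)
  -- the set of (continuous) coherent states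
  set T : Set (WeakDual ℂ A) :=
    {φ | φ 1 = 1 ∧ (∀ x : A, 0 ≤ φ (star x * x)) ∧
      ∀ x : A, ∀ a ∈ P, φ (x * a) = φ x * φ a} with hTdef
  have hT_closed : IsClosed T := by
    have h1 : IsClosed {φ : WeakDual ℂ A | φ 1 = 1} :=
      isClosed_singleton.preimage (WeakDual.eval_continuous (1 : A))
    have h2 : IsClosed {φ : WeakDual ℂ A | ∀ x : A, 0 ≤ φ (star x * x)} := by
      have : {φ : WeakDual ℂ A | ∀ x : A, 0 ≤ φ (star x * x)} =
          ⋂ x : A, (fun φ : WeakDual ℂ A => φ (star x * x)) ⁻¹' {z | 0 ≤ z} := by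
        ext φ; simp
      rw [this]
      exact isClosed_iInter fun x =>
        isClosed_nonneg_complex.preimage (WeakDual.eval_continuous _)
    have h3 : IsClosed {φ : WeakDual ℂ A | ∀ x : A, ∀ a ∈ P, φ (x * a) = φ x * φ a} := by
      have : {φ : WeakDual ℂ A | ∀ x : A, ∀ a ∈ P, φ (x * a) = φ x * φ a} =
          ⋂ (x : A), ⋂ (a : A), ⋂ (_ : a ∈ P),
            {φ : WeakDual ℂ A | φ (x * a) = φ x * φ a} := by
        ext φ; simp
      rw [this]
      refine isClosed_iInter fun x => isClosed_iInter fun a => isClosed_iInter fun _ => ?_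
      exact isClosed_eq (WeakDual.eval_continuous _)
        ((WeakDual.eval_continuous _).mul (WeakDual.eval_continuous _))
    exact h1.inter (h2.inter h3)
  have hT_bdd : Bornology.IsBounded (StrongDual.toWeakDual ⁻¹' T) := by
    refine Bornology.IsBounded.subset (Metric.isBounded_closedBall
      (x := (0 : StrongDual ℂ A)) (r := 1)) ?_
    rintro φ hφ
    rw [Metric.mem_closedBall, dist_zero_right]
    refine ContinuousLinearMap.opNorm_le_bound _ zero_le_one ?_
    intro x
    rw [one_mul]
    exact state_norm_le (φ : A →L[ℂ] ℂ).toLinearMap hφ.1 hφ.2.1 x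
  have hT_cpt : IsCompact T := WeakDual.isCompact_of_bounded_of_closed hT_bdd hT_closed
  have hIm_cpt : IsCompact (r '' T) := hT_cpt.image hr_cont
  -- any restriction of an element of T is a character
  have hchar : ∀ φ ∈ T, r φ ∈ WeakDual.characterSpace ℂ P := by
    intro φ hφ
    refine ⟨?_, ?_⟩
    · intro h0
      have h1 : r φ (1 : P) = 0 := by rw [h0]; rfl
      have h1' : r φ (1 : P) = 1 := by
        show φ (((1 : P) : A)) = 1
        rw [OneMemClass.coe_one]; exact hφ.1
      rw [h1] at h1'; exact zero_ne_one h1'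
    · intro a b
      show φ (((a * b : P) : A)) = φ ((a : A)) * φ ((b : A))
      rw [MulMemClass.coe_mul]
      exact hφ.2.2 (a : A) (b : A) b.2
  -- S is the preimage of r '' T under the subtype inclusion
  have hS_pre : S = Subtype.val ⁻¹' (r '' T) := by
    ext χ
    constructor
    · rintro ⟨ω, ⟨⟨hω1, hωpos⟩, hωmul⟩, hres⟩
      have hbound : ∀ x : A, ‖ω x‖ ≤ 1 * ‖x‖ := by
        intro x; rw [one_mul]; exact state_norm_le ω hω1 hωpos x
      let φ : WeakDual ℂ A := LinearMap.mkContinuous ω 1 hbound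
      have hφT : φ ∈ T := ⟨hω1, hωpos, hωmul⟩
      refine ⟨φ, hφT, ?_⟩
      apply ContinuousLinearMap.ext
      intro a
      show ω ((a : A)) = (χ : WeakDual ℂ P) a
      exact hres a
    · rintro ⟨φ, hφT, hφeq⟩
      refine ⟨(φ : A →L[ℂ] ℂ).toLinearMap, ⟨⟨hφT.1, hφT.2.1⟩, hφT.2.2⟩, ?_⟩
      intro a
      have := congrFun (congrArg (DFunLike.coe) hφeq) a
      exact this
  have hval_img : Subtype.val '' S = r '' T := by
    rw [hS_pre, Set.image_preimage_eq_of_subset]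
    rw [Subtype.range_coe_subtype]
    rintro ψ ⟨φ, hφ, rfl⟩
    exact hchar φ hφ
  constructor
  · rw [hS_pre]
    exact (hIm_cpt.isClosed).preimage continuous_subtype_val
  · rw [Topology.IsEmbedding.subtypeVal.isCompact_iff, hval_img]
    exact hIm_cpt
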